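/- Let H = K₃ × K₄ be the categorical (tensor) product of the complete graphs K₃ and K₄, i.e., the graph on pairs (i, j) with i ∈ {1,2,3} and j ∈ {1,2,3,4} in which (i₁, j₁) is adjacent to (i₂, j₂) if and only if i₁ ≠ i₂ and j₁ ≠ j₂. Then the chromatic number of H equals 3 and Kc(H, 4) ≥ 2. -/

import Mathlib

open SimpleGraph

/-- The spanning subgraph of `G` consisting of the edges both of whose endpoints
receive color `i` or color `j` under `φ`. -/
def kempeSubgraph {V : Type*} (G : SimpleGraph V) {k : ℕ} (φ : V → Fin k) (i j : Fin k) :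
    SimpleGraph V where
  Adj u v := G.Adj u v ∧ (φ u = i ∨ φ u = j) ∧ (φ v = i ∨ φ v = j)
  symm := ⟨fun u v ⟨h, hu, hv⟩ => ⟨h.symm, hv, hu⟩⟩
  loopless := ⟨fun v h => G.loopless.irrefl v h.1⟩

/-- `ψ` is obtained from `φ` by a single `i,j`-Kempe swap:  the colors `i` and `j` are
interchanged on the connected component (of the subgraph induced by colors `i,j`)
containing `w`, and nothing else changes. -/
def IsKempeSwap {V : Type*} (G : SimpleGraph V) {k : ℕ}
    (φ ψ : G.Coloring (Fin k)) : Prop :=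
  ∃ (i j : Fin k) (w : V), ∀ v : V,
    ((kempeSubgraph G (fun x => φ x) i j).Reachable w v → ψ v = Equiv.swap i j (φ v)) ∧
    (¬ (kempeSubgraph G (fun x => φ x) i j).Reachable w v → ψ v = φ v)

/-- Kempe `k`-equivalence of proper `k`-colorings:  one can be transformed into the
other by a sequence of Kempe swaps. -/
def KempeEquiv {V : Type*} (G : SimpleGraph V) (k : ℕ)
    (φ ψ : G.Coloring (Fin k)) : Prop :=
  Relation.EqvGen (IsKempeSwap G) φ ψ

/-- `Kc G k` is the number of Kempe equivalence classes of proper `k`-colorings of `G`. -/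
noncomputable def Kc {V : Type*} (G : SimpleGraph V) (k : ℕ) : ℕ :=
  Nat.card (Quot (KempeEquiv G k))

/-- `G` can be obtained from a bipartite graph by adding `ℓ` edges. -/
def BipartitePlus {V : Type*} (G : SimpleGraph V) (ℓ : ℕ) : Prop :=
  ∃ E : Finset (Sym2 V), E.card = ℓ ∧ ↑E ⊆ G.edgeSet ∧
    (G.deleteEdges ↑E).Colorable 2

/-- `K₃ × K₄`: the categorical (tensor) product of complete graphs, on
`Fin 3 × Fin 4`, where `(i₁,j₁)` is adjacent to `(i₂,j₂)` iff `i₁ ≠ i₂` and `j₁ ≠ j₂`. -/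
def Htensor : SimpleGraph (Fin 3 × Fin 4) where
  Adj p q := p.1 ≠ q.1 ∧ p.2 ≠ q.2
  symm := ⟨fun p q h => ⟨h.1.symm, h.2.symm⟩⟩
  loopless := ⟨fun p h => h.1 rfl⟩

/-- The vertices of `Ĥ`: pairs `(i,j)` with `i ∈ Fin 3`, `j ∈ Fin 4`, excluding the
three "diagonal" pairs (which correspond to `(1,1), (2,2), (3,3)` in the 1-indexed
description). -/
abbrev HhatVert : Type := {p : Fin 3 × Fin 4 // (p.1 : ℕ) ≠ (p.2 : ℕ)}

/-- The graph `Ĥ`, i.e. `K₃ × K₄` with the three diagonal vertices deleted. -/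
def Hhat : SimpleGraph HhatVert where
  Adj p q := p.1.1 ≠ q.1.1 ∧ p.1.2 ≠ q.1.2
  symm := ⟨fun p q h => ⟨h.1.symm, h.2.symm⟩⟩
  loopless := ⟨fun p h => h.1 rfl⟩

-- test helper lemmas
lemma swapMem {k : ℕ} (i j y : Fin k) :
    (Equiv.swap i j y = i ∨ Equiv.swap i j y = j) ↔ (y = i ∨ y = j) := by
  constructor
  · rintro (h | h)
    · right
      have := congrArg (Equiv.swap i j) h
      rwa [Equiv.swap_apply_self, Equiv.swap_apply_left] at this
    · left
      have := congrArg (Equiv.swap i j) h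
      rwa [Equiv.swap_apply_self, Equiv.swap_apply_right] at this
  · rintro (rfl | rfl)
    · right; exact Equiv.swap_apply_left _ _
    · left; exact Equiv.swap_apply_right _ _

lemma isKempeSwap_symm {V : Type*} {G : SimpleGraph V} {k : ℕ}
    {φ ψ : G.Coloring (Fin k)} (h : IsKempeSwap G φ ψ) : IsKempeSwap G ψ φ := by
  obtain ⟨i, j, w, h⟩ := h
  have hsub : kempeSubgraph G (fun x => ψ x) i j = kempeSubgraph G (fun x => φ x) i j := by
    ext u v
    have key : ∀ x : V, ((ψ x = i ∨ ψ x = j) ↔ (φ x = i ∨ φ x = j)) := by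
      intro x
      by_cases hr : (kempeSubgraph G (fun x => φ x) i j).Reachable w x
      · rw [(h x).1 hr]; exact swapMem i j (φ x)
      · rw [(h x).2 hr]
    show G.Adj u v ∧ _ ∧ _ ↔ G.Adj u v ∧ _ ∧ _
    rw [key u, key v]
  refine ⟨i, j, w, fun v => ?_⟩
  rw [hsub]
  refine ⟨fun hr => ?_, fun hr => ((h v).2 hr).symm⟩
  rw [(h v).1 hr, Equiv.swap_apply_self]

/-- The invariant: the coloring depends only on the second coordinate. -/
def ColByCol (φ : (Fin 3 × Fin 4) → Fin 4) : Prop :=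
  ∃ g : Fin 4 → Fin 4, ∀ v, φ v = g v.2

lemma fin3_aux : ∀ x y : Fin 3, ∃ z : Fin 3, z ≠ x ∧ z ≠ y := by decide

lemma fin3_aux2 : ∀ x : Fin 3, ∃ z z' : Fin 3, z ≠ x ∧ z' ≠ x ∧ z ≠ z' := by decide

/-- Walks from `w` stay put if `φ w` is not colored `i` or `j`. -/
lemma reach_first {V : Type*} {G : SimpleGraph V} {k : ℕ} {φ : V → Fin k} {i j : Fin k}
    {w v : V} (h : (kempeSubgraph G φ i j).Reachable w v) :
    v = w ∨ (φ w = i ∨ φ w = j) := by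
  obtain ⟨p⟩ := h
  cases p with
  | nil => exact Or.inl rfl
  | cons h' q => exact Or.inr h'.2.1

lemma reach_last {V : Type*} {G : SimpleGraph V} {k : ℕ} {φ : V → Fin k} {i j : Fin k}
    {w v : V} (h : (kempeSubgraph G φ i j).Reachable w v) :
    v = w ∨ (φ v = i ∨ φ v = j) := by
  rcases reach_first h.symm with h' | h'
  exacts [Or.inl h'.symm, Or.inr h']

/-- Full connectivity of the union of two color classes, when the coloring is by columns. -/
lemma reach_all {φ : Htensor.Coloring (Fin 4)} {g : Fin 4 → Fin 4}
    (hg : ∀ v : Fin 3 × Fin 4, φ v = g v.2) {i j : Fin 4} (hij : i ≠ j)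
    (u v : Fin 3 × Fin 4) (hu : φ u = i ∨ φ u = j) (hv : φ v = i ∨ φ v = j) :
    (kempeSubgraph Htensor (fun x => φ x) i j).Reachable u v := by
  have ginj : Function.Injective g := by
    intro a b hab
    by_contra hne
    have h01 : (0 : Fin 3) ≠ 1 := by decide
    exact φ.valid (show Htensor.Adj (0, a) (1, b) from ⟨h01, hne⟩)
      (by rw [hg, hg]; exact hab)
  have gsurj : Function.Surjective g := Finite.surjective_of_injective ginj
  obtain ⟨x, c⟩ := u
  obtain ⟨y, d⟩ := v
  simp only [hg] at hu hv
  by_cases hcd : c = d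
  · subst hcd
    by_cases hxy : x = y
    · subst hxy; exact Reachable.refl _
    · -- same column, different rows: go through another column
      set c' : Fin 4 := if g c = i then j else i with hc'
      have hc'mem : c' = i ∨ c' = j := by
        by_cases h : g c = i <;> simp [hc', h]
      have hc'ne : c' ≠ g c := by
        by_cases h : g c = i
        · rw [hc', if_pos h, h]; exact hij.symm
        · rw [hc', if_neg h]; exact fun hh => h hh.symm
      obtain ⟨e, he⟩ := gsurj c'
      have hec : e ≠ c := fun hh => hc'ne (hh ▸ he).symm
      obtain ⟨z, hz1, hz2⟩ := fin3_aux x y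
      have a1 : (kempeSubgraph Htensor (fun x => φ x) i j).Adj (x, c) (z, e) :=
        ⟨⟨hz1.symm, hec.symm⟩, by simpa [hg] using hu, by simp only [hg]; rw [he]; exact hc'mem⟩
      have a2 : (kempeSubgraph Htensor (fun x => φ x) i j).Adj (z, e) (y, c) :=
        ⟨⟨hz2, hec⟩, by simp only [hg]; rw [he]; exact hc'mem, by simpa [hg] using hu⟩
      exact a1.reachable.trans a2.reachable
  · by_cases hxy : x = y
    · subst hxy
      obtain ⟨z, z', hz1, hz2, hz3⟩ := fin3_aux2 x
      have a1 : (kempeSubgraph Htensor (fun x => φ x) i j).Adj (x, c) (z, d) :=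
        ⟨⟨hz1.symm, hcd⟩, by simpa [hg] using hu, by simpa [hg] using hv⟩
      have a2 : (kempeSubgraph Htensor (fun x => φ x) i j).Adj (z, d) (z', c) :=
        ⟨⟨hz3, fun hh => hcd hh.symm⟩, by simpa [hg] using hv, by simpa [hg] using hu⟩
      have a3 : (kempeSubgraph Htensor (fun x => φ x) i j).Adj (z', c) (x, d) :=
        ⟨⟨hz2, hcd⟩, by simpa [hg] using hu, by simpa [hg] using hv⟩
      exact (a1.reachable.trans a2.reachable).trans a3.reachable
    · exact Adj.reachable ⟨⟨hxy, hcd⟩, by simpa [hg] using hu, by simpa [hg] using hv⟩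

lemma colByCol_swap {φ ψ : Htensor.Coloring (Fin 4)}
    (hφ : ColByCol (fun x => φ x)) (h : IsKempeSwap Htensor φ ψ) :
    ColByCol (fun x => ψ x) := by
  obtain ⟨g, hg0⟩ := hφ
  have hg : ∀ v : Fin 3 × Fin 4, φ v = g v.2 := fun v => hg0 v
  obtain ⟨i, j, w, h⟩ := h
  by_cases hij : i = j
  · subst hij
    refine ⟨g, fun v => ?_⟩
    show ψ v = g v.2
    by_cases hr : (kempeSubgraph Htensor (fun x => φ x) i i).Reachable w v
    · rw [(h v).1 hr, Equiv.swap_self, Equiv.refl_apply, hg]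
    · rw [(h v).2 hr, hg]
  by_cases hw : φ w = i ∨ φ w = j
  · refine ⟨fun e => Equiv.swap i j (g e), fun v => ?_⟩
    show ψ v = Equiv.swap i j (g v.2)
    by_cases hv : φ v = i ∨ φ v = j
    · have hr := reach_all hg hij w v hw hv
      rw [(h v).1 hr, hg]
    · have hr : ¬ (kempeSubgraph Htensor (fun x => φ x) i j).Reachable w v := by
        intro hr
        rcases reach_last hr with rfl | hmem
        · exact hv hw
        · exact hv hmem
      rw [(h v).2 hr, hg]
      rw [Equiv.swap_apply_of_ne_of_ne]
      · intro hh; exact hv (Or.inl (by rw [hg]; exact hh))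
      · intro hh; exact hv (Or.inr (by rw [hg]; exact hh))
  · refine ⟨g, fun v => ?_⟩
    show ψ v = g v.2
    by_cases hr : (kempeSubgraph Htensor (fun x => φ x) i j).Reachable w v
    · rcases reach_first hr with rfl | hmem
      · rw [(h v).1 hr, hg, Equiv.swap_apply_of_ne_of_ne]
        · intro hh; exact hw (Or.inl (by rw [hg]; exact hh))
        · intro hh; exact hw (Or.inr (by rw [hg]; exact hh))
      · exact absurd hmem hw
    · rw [(h v).2 hr, hg]

lemma colByCol_equiv {φ ψ : Htensor.Coloring (Fin 4)}
    (h : KempeEquiv Htensor 4 φ ψ) :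
    (ColByCol (fun x => φ x) ↔ ColByCol (fun x => ψ x)) := by
  induction h with
  | rel a b hab => exact ⟨fun hp => colByCol_swap hp hab,
      fun hp => colByCol_swap hp (isKempeSwap_symm hab)⟩
  | refl a => exact Iff.rfl
  | symm a b _ ih => exact ih.symm
  | trans a b c _ _ ih1 ih2 => exact ih1.trans ih2

/-- Coloring by first coordinate. -/
def colA : Htensor.Coloring (Fin 4) :=
  Coloring.mk (fun v => Fin.castLE (by omega) v.1)
    (fun {u v} h hh => h.1 (Fin.castLE_injective (by omega) hh))

/-- Coloring by second coordinate. -/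
def colB : Htensor.Coloring (Fin 4) :=
  Coloring.mk (fun v => v.2) (fun {u v} h => h.2)

lemma colB_col : ColByCol (fun x => colB x) := ⟨id, fun _ => rfl⟩

lemma colA_not_col : ¬ ColByCol (fun x => colA x) := by
  rintro ⟨g, hg⟩
  have h12 : colA ((0 : Fin 3), (0 : Fin 4)) = colA ((1 : Fin 3), (0 : Fin 4)) :=
    (hg ((0 : Fin 3), (0 : Fin 4))).trans (hg ((1 : Fin 3), (0 : Fin 4))).symm
  exact absurd h12 (by decide)

instance : Finite (Htensor.Coloring (Fin 4)) :=
  Finite.of_injective (fun φ => (φ : Fin 3 × Fin 4 → Fin 4)) DFunLike.coe_injective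

lemma two_le_Kc : 2 ≤ Kc Htensor 4 := by
  have hne : Quot.mk _ colA ≠ Quot.mk (KempeEquiv Htensor 4) colB := by
    intro hq
    have h0 := Quot.eqvGen_exact hq
    have heq : KempeEquiv Htensor 4 colA colB :=
      (Equivalence.eqvGen_iff
        (Relation.EqvGen.is_equivalence (IsKempeSwap Htensor))).mp h0
    exact colA_not_col ((colByCol_equiv heq).mpr colB_col)
  have : Nontrivial (Quot (KempeEquiv Htensor 4)) := ⟨_, _, hne⟩
  exact Finite.one_lt_card

lemma chrom_eq : Htensor.chromaticNumber = 3 := by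
  refine le_antisymm ?_ ?_
  · have hcol : Htensor.Colorable 3 :=
      ⟨Coloring.mk (fun v => v.1) (fun {u v} h => h.1)⟩
    simpa using hcol.chromaticNumber_le
  · have hclique : Htensor.IsClique
        (↑({((0:Fin 3),(0:Fin 4)), ((1:Fin 3),(1:Fin 4)), ((2:Fin 3),(2:Fin 4))} :
          Finset (Fin 3 × Fin 4))) := by
      intro a ha b hb hab
      simp only [Finset.coe_insert, Set.mem_insert_iff, Finset.coe_singleton,
        Set.mem_singleton_iff] at ha hb
      rcases ha with rfl | rfl | rfl <;> rcases hb with rfl | rfl | rfl <;>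
        first
          | exact absurd rfl hab
          | exact ⟨by decide, by decide⟩
    have := hclique.card_le_chromaticNumber
    simpa using this

/-- `H = K₃ × K₄` has chromatic number 3 and at least two Kempe equivalence classes
of 4-colorings. -/
theorem stmt5 : Htensor.chromaticNumber = 3 ∧ 2 ≤ Kc Htensor 4 :=
  ⟨chrom_eq, two_le_Kc⟩
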